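/- Let P be a set of points in ℝ³ that is well-spaced with respect to a 1-Lipschitz spacing function λ with parameters δ and ε (0 < δ < 1/2, 0 < ε < 1). Then for any point p ∈ P, the set of Delaunay neighbors of p has spread at most 2(1+ε)/δ. -/
import Mathlib


/-- For a point `p` of a point set that is well-spaced with respect to a 1-Lipschitz
spacing function `λ` with parameters `δ` and `ε`, the set `N` of Delaunay neighbors of `p`
has spread at most `2(1+ε)/δ`: the ratio of any two pairwise distances among the
neighbors is at most `2(1+ε)/δ`. -/
theorem stmt3 (lam : EuclideanSpace ℝ (Fin 3) → ℝ) (hpos : ∀ x, 0 < lam x)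
    (hlip : LipschitzWith 1 lam) (δ ε : ℝ) (hδ0 : 0 < δ) (hδ : δ < 1/2)
    (hε0 : 0 < ε) (hε1 : ε < 1)
    (p : EuclideanSpace ℝ (Fin 3)) (N : Finset (EuclideanSpace ℝ (Fin 3)))
    (hnear : ∀ q ∈ N, dist p q ≤ ε * lam p ∧ dist p q ≤ ε * lam q)
    (hsep : ∀ q ∈ N, ∀ r ∈ N, q ≠ r → δ * ε * lam q ≤ dist q r) :
    ∀ q ∈ N, ∀ r ∈ N, ∀ q' ∈ N, ∀ r' ∈ N, q ≠ r → q' ≠ r' →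
      dist q r ≤ (2 * (1 + ε) / δ) * dist q' r' := by
  intro q hq r hr q' hq' r' hr' hqr hq'r'
  have hqp := (hnear q hq).1
  have hrp := (hnear r hr).1
  have hq'p := (hnear q' hq').2
  -- dist q r ≤ 2 ε lam p
  have h1 : dist q r ≤ 2 * ε * lam p := by
    calc dist q r ≤ dist q p + dist p r := dist_triangle q p r
    _ = dist p q + dist p r := by rw [dist_comm]
    _ ≤ ε * lam p + ε * lam p := add_le_add hqp hrp
    _ = 2 * ε * lam p := by ring
  -- Lipschitz: lam p ≤ lam q' + dist p q'
  have hlip' : lam p - lam q' ≤ dist p q' := by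
    have h := hlip.dist_le_mul p q'
    rw [NNReal.coe_one, one_mul, Real.dist_eq] at h
    linarith [le_abs_self (lam p - lam q')]
  have h2 : lam p ≤ (1 + ε) * lam q' := by nlinarith [hpos q']
  have h3 : δ * ε * lam q' ≤ dist q' r' := hsep q' hq' r' hr' hq'r'
  have hlamq' := hpos q'
  have key : dist q r ≤ (2 * (1 + ε) / δ) * (δ * ε * lam q') := by
    rw [div_mul_eq_mul_div, le_div_iff₀ hδ0]
    nlinarith [hpos p, mul_le_mul_of_nonneg_right h1 hδ0.le,
      mul_le_mul_of_nonneg_left h2 (mul_pos hε0 hδ0).le]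
  calc dist q r ≤ (2 * (1 + ε) / δ) * (δ * ε * lam q') := key
  _ ≤ (2 * (1 + ε) / δ) * dist q' r' := by
      apply mul_le_mul_of_nonneg_left h3
      positivity
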